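/- arXiv:2310.02577 — 6 statements merged into one kernel-verified Lean document; each statement's English description precedes it below -/
import Mathlib

section
/- Let G be a group and x, y ∈ G with [x^n, y^m] = 1 for some positive integers n, m. Then the identity 1 = [x^n, y^m] can be written as a product of nm conjugates of [x,y]; in particular, if [x,y] ≠ 1 then [x,y] is a generalized torsion element and nm ∈ t([x,y]). -/
open scoped commutatorElement

/-- The generalized torsion equation spectrum of `g`. -/
def gts {G : Type*} [Group G] (g : G) : Set ℕ :=
  {n | 0 < n ∧ ∃ x : Fin n → G, (List.ofFn fun i => x i * g * (x i)⁻¹).prod = 1}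

/-- `t` is a product of `k` conjugates of `c`. -/
private def CP {G : Type*} [Group G] (c : G) (k : ℕ) (t : G) : Prop :=
  ∃ l : List G, l.length = k ∧ (∀ g ∈ l, ∃ z : G, g = z * c * z⁻¹) ∧ l.prod = t

private lemma CP_one {G : Type*} [Group G] (c : G) : CP c 0 1 :=
  ⟨[], rfl, by simp, rfl⟩

private lemma CP_self {G : Type*} [Group G] (c : G) : CP c 1 c := by
  refine ⟨[c], rfl, ?_, by simp⟩
  intro g hg
  simp only [List.mem_singleton] at hg
  exact ⟨1, by simp [hg]⟩

private lemma CP_mul {G : Type*} [Group G] {c : G} {k k' : ℕ} {s t : G}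
    (h : CP c k s) (h' : CP c k' t) : CP c (k + k') (s * t) := by
  obtain ⟨l, hl, hm, hp⟩ := h
  obtain ⟨l', hl', hm', hp'⟩ := h'
  refine ⟨l ++ l', by simp [hl, hl'], ?_, by simp [hp, hp']⟩
  intro g hg
  rcases List.mem_append.mp hg with hg | hg
  · exact hm g hg
  · exact hm' g hg

private lemma CP_conj {G : Type*} [Group G] {c : G} {k : ℕ} {t : G} (u : G)
    (h : CP c k t) : CP c k (u * t * u⁻¹) := by
  obtain ⟨l, hl, hm, hp⟩ := h
  refine ⟨l.map (fun g => u * g * u⁻¹), by simp [hl], ?_, ?_⟩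
  · intro g hg
    obtain ⟨a, ha, rfl⟩ := List.mem_map.mp hg
    obtain ⟨z, rfl⟩ := hm a ha
    exact ⟨u * z, by group⟩
  · have : (l.map (fun g => (MulAut.conj u) g)).prod = (MulAut.conj u) l.prod :=
      (map_list_prod (MulAut.conj u) l).symm ▸ rfl
    simpa [MulAut.conj_apply, hp] using this

private lemma CP_y {G : Type*} [Group G] (x y : G) : ∀ m : ℕ, CP ⁅x, y⁆ m ⁅x, y ^ m⁆ := by
  intro m
  induction m with
  | zero => simpa using CP_one ⁅x, y⁆
  | succ m ih =>
    have key : ⁅x, y ^ (m + 1)⁆ = ⁅x, y⁆ * (y * ⁅x, y ^ m⁆ * y⁻¹) := by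
      simp only [commutatorElement_def]
      group
    rw [key, show m + 1 = 1 + m from Nat.add_comm m 1]
    exact CP_mul (CP_self _) (CP_conj y ih)

private lemma CP_xy {G : Type*} [Group G] (x y : G) (m : ℕ) :
    ∀ n : ℕ, CP ⁅x, y⁆ (n * m) ⁅x ^ n, y ^ m⁆ := by
  intro n
  induction n with
  | zero => simpa using CP_one ⁅x, y⁆
  | succ n ih =>
    have key : ⁅x ^ (n + 1), y ^ m⁆ = (x ^ n * ⁅x, y ^ m⁆ * (x ^ n)⁻¹) * ⁅x ^ n, y ^ m⁆ := by
      simp only [commutatorElement_def]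
      group
    rw [key, show (n + 1) * m = m + n * m by ring]
    exact CP_mul (CP_conj (x ^ n) (CP_y x y m)) ih

theorem stmt_5 {G : Type*} [Group G] (x y : G) (n m : ℕ)
    (hn : 0 < n) (hm : 0 < m) (hc : ⁅x ^ n, y ^ m⁆ = 1) :
    (∃ z : Fin (n * m) → G, ⁅x ^ n, y ^ m⁆ = (List.ofFn fun i => z i * ⁅x, y⁆ * (z i)⁻¹).prod) ∧
      (⁅x, y⁆ ≠ 1 → n * m ∈ gts ⁅x, y⁆) := by
  obtain ⟨l, hl, hmem, hprod⟩ := CP_xy x y m n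
  have hz : ∃ z : Fin (n * m) → G,
      ⁅x ^ n, y ^ m⁆ = (List.ofFn fun i => z i * ⁅x, y⁆ * (z i)⁻¹).prod := by
    choose f hf using hmem
    refine ⟨fun i => f (l.get (Fin.cast hl.symm i)) (l.get_mem _), ?_⟩
    have hleq : (List.ofFn fun i : Fin (n * m) =>
        (fun i => f (l.get (Fin.cast hl.symm i)) (l.get_mem _)) i * ⁅x, y⁆ *
          ((fun i => f (l.get (Fin.cast hl.symm i)) (l.get_mem _)) i)⁻¹) = l := by
      refine List.ext_getElem (by simp [hl]) ?_
      intro i h1 h2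
      simp only [List.getElem_ofFn]
      exact (hf (l.get ⟨i, h2⟩) (l.get_mem _)).symm
    rw [hleq, hprod]
  refine ⟨hz, fun _ => ?_⟩
  obtain ⟨z, hzeq⟩ := hz
  exact ⟨Nat.mul_pos hn hm, z, by rw [← hzeq, hc]⟩
end

section
/- A group G is an R-group (x^n = y^n with n ≥ 1 implies x = y) if and only if G is torsion-free and for all x, y ∈ G and all n, m ≥ 1, [x^n, y^m] = 1 implies [x,y] = 1. -/
open scoped commutatorElement

theorem stmt_7 {G : Type*} [Group G] :
    (∀ (x y : G) (n : ℕ), 1 ≤ n → x ^ n = y ^ n → x = y) ↔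
      ((∀ (g : G) (n : ℕ), 1 ≤ n → g ^ n = 1 → g = 1) ∧
        ∀ (x y : G) (n m : ℕ), 1 ≤ n → 1 ≤ m → ⁅x ^ n, y ^ m⁆ = 1 → ⁅x, y⁆ = 1) := by
  constructor
  · intro hR
    refine ⟨fun g n hn h => hR g 1 n hn (by simpa using h), ?_⟩
    intro x y n m hn hm hc
    rw [commutatorElement_eq_one_iff_commute] at hc ⊢
    have h1 : Commute (x ^ n) y := by
      have : (x ^ n * y * (x ^ n)⁻¹) ^ m = y ^ m := by
        rw [conj_pow, hc.eq, mul_inv_cancel_right]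
      have := hR _ _ m hm this
      rwa [mul_inv_eq_iff_eq_mul] at this
    have h2 : (y * x * y⁻¹) ^ n = x ^ n := by
      rw [conj_pow, h1.symm.eq, mul_inv_cancel_right]
    have := hR _ _ n hn h2
    rw [mul_inv_eq_iff_eq_mul] at this
    exact this.symm
  · rintro ⟨htf, hcom⟩ x y n hn h
    have hc : ⁅x, y⁆ = 1 := hcom x y n n hn hn (by rw [h]; exact commutatorElement_eq_one_iff_commute.mpr (Commute.refl _))
    rw [commutatorElement_eq_one_iff_commute] at hc
    have : (x * y⁻¹) ^ n = 1 := by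
      rw [hc.inv_right.mul_pow, h, inv_pow, mul_inv_cancel]
    have := htf _ n hn this
    rw [mul_inv_eq_one] at this
    exact this
end

section
/- A group G has an element g ≠ 1 with 2 ∈ t(g) (a generalized torsion element of generalized torsion order two) if and only if there exist x, y ∈ G with x^2 = y^2 but x ≠ y. -/
theorem stmt_9 {G : Type*} [Group G] :
    (∃ g : G, g ≠ 1 ∧ 2 ∈ gts g) ↔ ∃ x y : G, x ^ 2 = y ^ 2 ∧ x ≠ y := by
  constructor
  · rintro ⟨g, hg, -, x, hx⟩
    simp only [List.ofFn_succ, List.ofFn_zero, List.prod_cons, List.prod_nil, mul_one] at hx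
    set a := x 0
    set b := x 1
    have hb : x (Fin.succ 0) = b := rfl
    rw [hb] at hx
    set u := a * g * a⁻¹ with hu
    set c := b * a⁻¹ with hc
    have hu1 : u ≠ 1 := by
      intro h
      apply hg
      have hga : g = a⁻¹ * u * a := by rw [hu]; group
      rw [hga, h]; group
    have h0 : u * (c * u * c⁻¹) = 1 := by
      have : u * (c * u * c⁻¹) = a * g * a⁻¹ * (b * g * b⁻¹) := by rw [hu, hc]; group
      rw [this, hx]
    have key : c * u = u⁻¹ * c := by
      rw [inv_eq_of_mul_eq_one_right h0]; group
    refine ⟨c * u, u⁻¹ * c * u, ?_, ?_⟩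
    · calc (c * u) ^ 2 = (u⁻¹ * c) * (u⁻¹ * c) := by rw [pow_two, key]
        _ = u⁻¹ * c * (u⁻¹ * c) := by group
        _ = u⁻¹ * c * (c * u) := by rw [key]
        _ = (u⁻¹ * c * u) ^ 2 := by rw [pow_two]; group
    · intro h
      have h' : c = u⁻¹ * c := mul_right_cancel h
      exact hu1 (inv_eq_one.mp (right_eq_mul.mp h'))
  · rintro ⟨x, y, hxy, hne⟩
    refine ⟨x⁻¹ * y, ?_, two_pos, ![1, x], ?_⟩
    · intro h
      apply hne
      have : x * (x⁻¹ * y) = x * 1 := by rw [h]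
      simpa using this.symm
    · simp only [List.ofFn_succ, List.ofFn_zero, List.prod_cons, List.prod_nil, mul_one,
        Matrix.cons_val_zero, Matrix.cons_val_one, Matrix.head_cons]
      calc 1 * (x⁻¹ * y) * 1⁻¹ * (x * (x⁻¹ * y) * x⁻¹)
          = x⁻¹ * y ^ 2 * x⁻¹ := by rw [pow_two]; group
        _ = x⁻¹ * x ^ 2 * x⁻¹ := by rw [hxy]
        _ = 1 := by group
end

section
/- For elements g_1,...,g_n of a group G and any k ≥ 1, the element (g_1 g_2 \cdots g_n)^{2k} can be written as g_1^{2k} g_2^{2k} \cdots g_n^{2k} multiplied by a product of at most (n-1)k commutators. -/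
open scoped commutatorElement

private lemma key_step {G : Type*} [Group G] (x y : G) (m : ℕ) :
    (x*y)^2 * x^m * y^m = x^(m+2) * y^(m+2) *
      ⁅(y^(m+2))⁻¹ * (x^(m+1))⁻¹ * y^(m+1), (y^m)⁻¹ * (x^m)⁻¹ * y^(m+1)⁆ := by
  rw [pow_two]
  group

private lemma two_case {G : Type*} [Group G] (x y : G) (k : ℕ) :
    ∃ l : List (G × G), l.length = k ∧
      (x*y)^(2*k) = x^(2*k) * y^(2*k) * (l.map fun p => ⁅p.1, p.2⁆).prod := by
  induction k with
  | zero => exact ⟨[], rfl, by simp⟩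
  | succ k ih =>
    obtain ⟨l, hl, he⟩ := ih
    refine ⟨((y^(2*k+2))⁻¹ * (x^(2*k+1))⁻¹ * y^(2*k+1),
             (y^(2*k))⁻¹ * (x^(2*k))⁻¹ * y^(2*k+1)) :: l, by simp [hl], ?_⟩
    have h1 : (x*y)^(2*(k+1)) = (x*y)^2 * ((x*y)^(2*k)) := by
      rw [← pow_add]; ring_nf
    rw [h1, he, List.map_cons, List.prod_cons]
    have h2 := key_step x y (2*k)
    calc (x*y)^2 * (x^(2*k) * y^(2*k) * (l.map fun p => ⁅p.1, p.2⁆).prod)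
        = ((x*y)^2 * x^(2*k) * y^(2*k)) * (l.map fun p => ⁅p.1, p.2⁆).prod := by
          simp [mul_assoc]
      _ = (x^(2*k+2) * y^(2*k+2) *
            ⁅(y^(2*k+2))⁻¹ * (x^(2*k+1))⁻¹ * y^(2*k+1),
              (y^(2*k))⁻¹ * (x^(2*k))⁻¹ * y^(2*k+1)⁆) *
            (l.map fun p => ⁅p.1, p.2⁆).prod := by rw [h2]
      _ = x^(2*(k+1)) * y^(2*(k+1)) *
            (⁅(y^(2*k+2))⁻¹ * (x^(2*k+1))⁻¹ * y^(2*k+1),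
              (y^(2*k))⁻¹ * (x^(2*k))⁻¹ * y^(2*k+1)⁆ *
             (l.map fun p => ⁅p.1, p.2⁆).prod) := by
          have : 2*(k+1) = 2*k+2 := by ring
          rw [this]; simp [mul_assoc]

private lemma list_case {G : Type*} [Group G] (k : ℕ) (L : List G) :
    ∃ l : List (G × G), l.length = (L.length - 1) * k ∧
      L.prod ^ (2*k) = (L.map (· ^ (2*k))).prod * (l.map fun p => ⁅p.1, p.2⁆).prod := by
  induction L with
  | nil => exact ⟨[], by simp, by simp⟩
  | cons x L ih =>
    rcases L with _ | ⟨y, M⟩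
    · exact ⟨[], by simp, by simp⟩
    · set T : List G := y :: M with hT
      obtain ⟨l₂, hl₂, he₂⟩ := ih
      obtain ⟨l₁, hl₁, he₁⟩ := two_case x T.prod k
      refine ⟨l₂ ++ l₁, ?_, ?_⟩
      · have hlen : T.length ≥ 1 := by simp [hT]
        rw [List.length_append, hl₂, hl₁]
        have : (x :: T).length - 1 = (T.length - 1) + 1 := by
          simp only [List.length_cons]; omega
        rw [this]; ring
      · rw [List.prod_cons, he₁, he₂, List.map_cons, List.prod_cons, List.map_append,
          List.prod_append]
        simp [hT, mul_assoc]

private lemma to_fn {G : Type*} [Group G] (l : List (G × G)) (m : ℕ) (hl : l.length = m) :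
    ∃ a b : Fin m → G,
      (l.map fun p => ⁅p.1, p.2⁆).prod = (List.ofFn fun j => ⁅a j, b j⁆).prod := by
  subst hl
  refine ⟨fun j => (l.get j).1, fun j => (l.get j).2, ?_⟩
  congr 1
  conv_lhs => rw [← List.ofFn_get l]
  rw [List.map_ofFn]
  rfl

theorem stmt_11 {G : Type*} [Group G] (n k : ℕ) (hk : 1 ≤ k) (g : Fin n → G) :
    ∃ a b : Fin ((n - 1) * k) → G,
      (List.ofFn g).prod ^ (2 * k) = (List.ofFn fun i => g i ^ (2 * k)).prod * (List.ofFn fun j => ⁅a j, b j⁆).prod := by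
  obtain ⟨l, hl, he⟩ := list_case k (List.ofFn g)
  rw [List.length_ofFn] at hl
  obtain ⟨a, b, hab⟩ := to_fn l ((n - 1) * k) hl
  refine ⟨a, b, ?_⟩
  rw [he, hab]
  congr 1
  rw [List.map_ofFn]
  rfl
end

section
/- Let N be a normal subgroup of G, and let ν: N → ℝ_{≥0} be a G-invariant norm (ν(gag^{-1}) = ν(a) for g ∈ G, a ∈ N, and ν(ab) ≤ ν(a)+ν(b)). If C := sup{ν([s,t]) : s,t ∈ N} < ∞, then the stabilization \bar{ν}(g) := lim_{n→∞} ν(g^n)/n satisfies \bar{ν}(gh) ≤ \bar{ν}(g) + \bar{ν}(h) + C/2 for all g, h ∈ N. -/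
open Filter
open scoped commutatorElement

theorem stmt_12 {G : Type*} [Group G] (N : Subgroup G) [N.Normal]
    (ν : N → ℝ) (hnonneg : ∀ a : N, 0 ≤ ν a)
    (hinv : ∀ (g : G) (a b : N), (b : G) = g * (a : G) * g⁻¹ → ν b = ν a)
    (hsub : ∀ a b : N, ν (a * b) ≤ ν a + ν b)
    (C : ℝ) (hC : IsLUB {r | ∃ s t : N, r = ν ⁅s, t⁆} C)
    (barν : N → ℝ)
    (hbar : ∀ a : N,
      Filter.Tendsto (fun n : ℕ => ν (a ^ n) / n) Filter.atTop (nhds (barν a)))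
    (g h : N) : barν (g * h) ≤ barν g + barν h + C / 2 := by
  have hconj : ∀ z x : N, ν (z * x * z⁻¹) = ν x := by
    intro z x
    refine hinv (z : G) x (z * x * z⁻¹) ?_
    push_cast
    rfl
  have hCb : ∀ s t : N, ν ⁅s, t⁆ ≤ C := fun s t => hC.1 ⟨s, t, rfl⟩
  have hC0 : 0 ≤ C := le_trans (hnonneg ⁅1, 1⁆) (hCb 1 1)
  set d : ℕ → N := fun n => (g*h)^n * (h^n)⁻¹ * (g^n)⁻¹ with hd
  have hdbound : ∀ n : ℕ, ν (d n) ≤ (↑(n / 2) : ℝ) * C + ν 1 := by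
    intro n
    induction n using Nat.twoStepInduction with
    | zero =>
      have : d 0 = 1 := by simp [hd]
      rw [this]
      simp
    | one =>
      have : d 1 = 1 := by simp only [hd]; group
      rw [this]
      simp
    | more n ih _ =>
      set x : N := (h^(n+1))⁻¹ * g^n * h^n with hx
      set y : N := (h^n)⁻¹ * (g^n)⁻¹ * h⁻¹ * g⁻¹ * h^n with hy
      have hF : ⁅x, y⁆ = (h^(n+2))⁻¹ * ((g^(n+2))⁻¹ * ((g*h)^2 * (g^n * h^n))) := by
        rw [commutatorElement_def, hx, hy, pow_two]
        group
      have key : d (n+2) =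
          ((g*h)^(n+2) * ⁅x, y⁆ * ((g*h)^(n+2))⁻¹) *
          ((g*h)^2 * d n * ((g*h)^2)⁻¹) := by
        simp only [hd, hF]
        group
      have e1 : ν (d (n+2)) ≤ ν ((g*h)^(n+2) * ⁅x, y⁆ * ((g*h)^(n+2))⁻¹) +
          ν ((g*h)^2 * d n * ((g*h)^2)⁻¹) := by
        rw [key]; exact hsub _ _
      rw [hconj, hconj] at e1
      have e2 : ν (d (n+2)) ≤ C + ((↑(n / 2) : ℝ) * C + ν 1) :=
        le_trans e1 (add_le_add (hCb x y) ih)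
      have e3 : (n+2)/2 = n/2 + 1 := Nat.add_div_right n (by norm_num)
      rw [e3]
      push_cast
      linarith
  have hmain : ∀ n : ℕ, 1 ≤ n →
      ν ((g*h)^n) / n ≤ ν (g^n)/n + ν (h^n)/n + C/2 + ν 1 / n := by
    intro n hn
    have hnpos : (0:ℝ) < n := by exact_mod_cast hn
    have split : (g*h)^n = d n * (g^n * h^n) := by simp only [hd]; group
    have h1 : ν ((g*h)^n) ≤ ν (d n) + (ν (g^n) + ν (h^n)) := by
      rw [split]
      exact le_trans (hsub _ _) (add_le_add_right (hsub _ _) _)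
    have h2 : (↑(n/2):ℝ) ≤ (n:ℝ)/2 := by
      have := Nat.cast_div_le (α := ℝ) (m := n) (n := 2)
      simpa using this
    have h3 : ν ((g*h)^n) ≤ ν (g^n) + ν (h^n) + (n:ℝ)*(C/2) + ν 1 := by
      have := hdbound n
      have h4 : (↑(n/2):ℝ) * C ≤ ((n:ℝ)/2) * C := mul_le_mul_of_nonneg_right h2 hC0
      have h5 : ((n:ℝ)/2) * C = (n:ℝ) * (C/2) := by ring
      linarith
    calc ν ((g*h)^n) / n ≤ (ν (g^n) + ν (h^n) + (n:ℝ)*(C/2) + ν 1) / n := by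
          gcongr
      _ = ν (g^n)/n + ν (h^n)/n + C/2 + ν 1/n := by
          field_simp
  have hlim : Tendsto (fun n : ℕ => ν (g^n)/n + ν (h^n)/n + C/2 + ν 1/n) atTop
      (nhds (barν g + barν h + C/2 + 0)) :=
    ((((hbar g).add (hbar h)).add tendsto_const_nhds).add
      (tendsto_const_div_atTop_nhds_zero_nat (ν 1)))
  have hfin := le_of_tendsto_of_tendsto (hbar (g*h)) hlim
    (eventually_atTop.2 ⟨1, fun n hn => hmain n hn⟩)
  simpa using hfin
end

section
/- Let h(t) = a_m t^m + ... + a_0 ∈ ℤ[t] with a_0, a_m ≠ 0 and m ≥ 1. If g(t)h(t) is a nonzero polynomial with all coefficients nonnegative, then g(1)h(1) ≥ |a_m| + |a_0|. -/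
open Polynomial in
theorem stmt_16 (h g : Polynomial ℤ) (m : ℕ) (hm : 1 ≤ m)
    (hdeg : h.natDegree = m) (h0 : h.coeff 0 ≠ 0) (hlead : h.coeff m ≠ 0)
    (hpos : g * h ≠ 0) (hcoeff : ∀ i : ℕ, 0 ≤ (g * h).coeff i) :
    g.eval 1 * h.eval 1 ≥ |h.coeff m| + |h.coeff 0| := by
  set f := g * h with hf
  have hg : g ≠ 0 := left_ne_zero_of_mul hpos
  have hh : h ≠ 0 := right_ne_zero_of_mul hpos
  have hn : f.natDegree = g.natDegree + m := by
    rw [hf, natDegree_mul hg hh, hdeg]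
  have htd0 : h.natTrailingDegree = 0 := natTrailingDegree_eq_zero.mpr (Or.inr h0)
  have hk : f.natTrailingDegree = g.natTrailingDegree := by
    rw [hf, natTrailingDegree_mul hg hh, htd0, add_zero]
  set k := f.natTrailingDegree with hkdef
  set n := f.natDegree with hndef
  have hkn : k < n := by
    have := g.natTrailingDegree_le_natDegree
    omega
  -- coeff at n
  have hcn : |h.coeff m| ≤ f.coeff n := by
    have h1 : f.coeff n = f.leadingCoeff := rfl
    have h2 : f.leadingCoeff = g.leadingCoeff * h.leadingCoeff := leadingCoeff_mul g h
    have h3 : h.leadingCoeff = h.coeff m := by rw [leadingCoeff, hdeg]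
    have h4 : 0 ≤ f.coeff n := hcoeff n
    have h5 : (1 : ℤ) ≤ |g.leadingCoeff| := Int.one_le_abs (leadingCoeff_ne_zero.mpr hg)
    calc |h.coeff m| ≤ |g.leadingCoeff| * |h.coeff m| :=
          le_mul_of_one_le_left (abs_nonneg _) h5
      _ = |f.coeff n| := by rw [h1, h2, h3, abs_mul]
      _ = f.coeff n := abs_of_nonneg h4
  have hck : |h.coeff 0| ≤ f.coeff k := by
    have h1 : f.coeff k = f.trailingCoeff := rfl
    have h2 : f.trailingCoeff = g.trailingCoeff * h.trailingCoeff := trailingCoeff_mul g h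
    have h3 : h.trailingCoeff = h.coeff 0 := by rw [trailingCoeff, htd0]
    have h4 : 0 ≤ f.coeff k := hcoeff k
    have h5 : (1 : ℤ) ≤ |g.trailingCoeff| := Int.one_le_abs ((mt trailingCoeff_eq_zero.mp hg))
    calc |h.coeff 0| ≤ |g.trailingCoeff| * |h.coeff 0| :=
          le_mul_of_one_le_left (abs_nonneg _) h5
      _ = |f.coeff k| := by rw [h1, h2, h3, abs_mul]
      _ = f.coeff k := abs_of_nonneg h4
  have heval : g.eval 1 * h.eval 1 = f.eval 1 := by rw [hf, eval_mul]
  have hsum : f.eval 1 = ∑ i ∈ Finset.range (n + 1), f.coeff i := by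
    rw [eval_eq_sum_range]
    simp
    rfl
  have hsub : ({k, n} : Finset ℕ) ⊆ Finset.range (n + 1) := by
    intro x hx
    simp only [Finset.mem_insert, Finset.mem_singleton] at hx
    rcases hx with rfl | rfl <;> simp [Finset.mem_range] <;> omega
  have hge : f.coeff k + f.coeff n ≤ ∑ i ∈ Finset.range (n + 1), f.coeff i := by
    rw [← Finset.sum_pair hkn.ne]
    exact Finset.sum_le_sum_of_subset_of_nonneg hsub (fun i _ _ => hcoeff i)
  rw [ge_iff_le, heval, hsum]
  calc |h.coeff m| + |h.coeff 0| ≤ f.coeff n + f.coeff k := add_le_add hcn hck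
    _ = f.coeff k + f.coeff n := add_comm _ _
    _ ≤ _ := hge
end
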